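/- Let f : ℝᵖ → ℝ be piecewise linear on disjoint hyperrectangles A_k = Πᵢ [l_{i,k}, r_{i,k}], k = 1,…,m, with f(X) = Σₖ (Σᵢ a_{i,k}Xᵢ + b_k)·1{X ∈ A_k}, and let features be mutually independent with P(Xᵢ ∈ A_{i,k}) > 0 for all i,k. Then the Local Shapley Value of feature l at x decomposes as φ_{x_l} = Σ_{k=1}^m φ_{x_l}^k, where φ_{x_l}^k = (1{x_l ∈ A_{l,k}}/P(X_l ∈ A_{l,k}) − 1)·Σ_{S⊆[p]\{l}} w(S)·v_k(S) + a_{l,k}·(x_l − E[X_l·1{X_l∈A_{l,k}}]/P(X_l∈A_{l,k}))·Σ_{S⊆[p]\{l}} w(S)·Π_{i∈S∪{l}} 1{x_i∈A_{i,k}}·Π_{j∉S∪{l}} P(X_j∈A_{j,k}), with v_k(S) = E[f_k(X)·1{X∈A_k} | X_S = x_S] and w(S) = (1/p)·C(p−1,|S|)⁻¹. -/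

import Mathlib

open Finset MeasureTheory Classical

/-- Shapley value of player `l` for the game `v` on `p` players, with standard weights
`w(S) = (1/p) * C(p-1, |S|)⁻¹`. -/
noncomputable def shapleyValue (p : ℕ) (v : Finset (Fin p) → ℝ) (l : Fin p) : ℝ :=
  ∑ S ∈ (Finset.univ.erase l).powerset,
    (1 / (p : ℝ)) * ((Nat.choose (p - 1) S.card : ℝ))⁻¹ * (v (insert l S) - v S)

/-- The piecewise linear model `f(X) = ∑ₖ (∑ᵢ a_{i,k} Xᵢ + b_k)·1{X ∈ A_k}`,
with `A_k = Πᵢ A_{i,k}`. -/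
noncomputable def piecewiseLinear (p m : ℕ) (a : Fin p → Fin m → ℝ) (b : Fin m → ℝ)
    (A : Fin p → Fin m → Set ℝ) (z : Fin p → ℝ) : ℝ :=
  ∑ k, (∑ i, a i k * z i + b k) *
    Set.indicator {w : Fin p → ℝ | ∀ i, w i ∈ A i k} (fun _ => (1 : ℝ)) z

/-- Component value function `v_k(S) = E[f_k(X)·1{X ∈ A_k} | X_S = x_S]`, where conditioning
means substituting `x_S` and integrating the remaining mutually independent coordinates. -/
noncomputable def vComp (p m : ℕ) (a : Fin p → Fin m → ℝ) (b : Fin m → ℝ)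
    (A : Fin p → Fin m → Set ℝ) (μ : Fin p → Measure ℝ) (x : Fin p → ℝ)
    (k : Fin m) (S : Finset (Fin p)) : ℝ :=
  ∫ y, (∑ i, a i k * (if i ∈ S then x i else y i) + b k) *
      Set.indicator {w : Fin p → ℝ | ∀ i, w i ∈ A i k} (fun _ => (1 : ℝ))
        (fun i => if i ∈ S then x i else y i) ∂(Measure.pi μ)

theorem integral_pi_prod {p : ℕ} (μ : Fin p → Measure ℝ) [∀ i, SigmaFinite (μ i)]
    (f : Fin p → ℝ → ℝ) :
    ∫ y, ∏ i, f i (y i) ∂(Measure.pi μ) = ∏ i, ∫ t, f i t ∂(μ i) := by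
  have := MeasureTheory.integral_fin_nat_prod_eq_prod (𝕜 := ℝ) (μ := μ) f
  exact this

theorem integrable_pi_prod {p : ℕ} (μ : Fin p → Measure ℝ) [∀ i, SigmaFinite (μ i)]
    (f : Fin p → ℝ → ℝ) (hf : ∀ i, Integrable (f i) (μ i)) :
    Integrable (fun y => ∏ i, f i (y i)) (Measure.pi μ) := by
  have := MeasureTheory.Integrable.fin_nat_prod (𝕜 := ℝ) (μ := μ) (f := f) hf
  exact this

/-- the per-coordinate factor `c_j(S)` -/
noncomputable def lsvC {p m : ℕ} (A : Fin p → Fin m → Set ℝ) (μ : Fin p → Measure ℝ)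
    (x : Fin p → ℝ) (k : Fin m) (S : Finset (Fin p)) (j : Fin p) : ℝ :=
  if j ∈ S then (if x j ∈ A j k then (1 : ℝ) else 0) else (μ j (A j k)).toReal

/-- the per-coordinate factor `e_j(S)` -/
noncomputable def lsvE {p m : ℕ} (A : Fin p → Fin m → Set ℝ) (μ : Fin p → Measure ℝ)
    (x : Fin p → ℝ) (k : Fin m) (S : Finset (Fin p)) (j : Fin p) : ℝ :=
  if j ∈ S then x j * (if x j ∈ A j k then (1 : ℝ) else 0) else ∫ t in A j k, t ∂(μ j)

theorem box_ind {p m : ℕ} (A : Fin p → Fin m → Set ℝ) (k : Fin m) (z : Fin p → ℝ) :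
    Set.indicator {w : Fin p → ℝ | ∀ i, w i ∈ A i k} (fun _ => (1 : ℝ)) z
      = ∏ j, Set.indicator (A j k) (fun _ => (1 : ℝ)) (z j) := by
  by_cases h : ∀ i, z i ∈ A i k
  · rw [Set.indicator_of_mem (show z ∈ {w : Fin p → ℝ | ∀ i, w i ∈ A i k} from h)]
    rw [Finset.prod_congr rfl fun j _ => Set.indicator_of_mem (h j) _]
    simp
  · rw [Set.indicator_of_notMem (show z ∉ {w : Fin p → ℝ | ∀ i, w i ∈ A i k} from h)]
    push_neg at h
    obtain ⟨i, hi⟩ := h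
    exact (Finset.prod_eq_zero (mem_univ i) (Set.indicator_of_notMem hi _)).symm

section closed
variable {p m : ℕ} (a : Fin p → Fin m → ℝ) (b : Fin m → ℝ) (A : Fin p → Fin m → Set ℝ)
  (μ : Fin p → Measure ℝ) (x : Fin p → ℝ) (k : Fin m) (S : Finset (Fin p))

theorem vComp_closed [∀ i, IsProbabilityMeasure (μ i)]
    (hA : ∀ i k, MeasurableSet (A i k)) (hint : ∀ i, Integrable (id : ℝ → ℝ) (μ i)) :
    vComp p m a b A μ x k S
      = ∑ i, a i k * (lsvE A μ x k S i * ∏ j ∈ univ.erase i, lsvC A μ x k S j)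
        + b k * ∏ j, lsvC A μ x k S j := by
  classical
  set G : Fin p → Fin p → ℝ → ℝ := fun i j t =>
    (if j = i then a i k * (if j ∈ S then x j else t) else 1) *
      Set.indicator (A j k) (fun _ => (1 : ℝ)) (if j ∈ S then x j else t) with hG
  set H : Fin p → ℝ → ℝ := fun j t =>
    Set.indicator (A j k) (fun _ => (1 : ℝ)) (if j ∈ S then x j else t) with hH
  have hGint : ∀ i j, Integrable (G i j) (μ j) := by
    intro i j
    by_cases hjS : j ∈ S
    · have : G i j = fun _ => (if j = i then a i k * x j else 1) *
          Set.indicator (A j k) (fun _ => (1 : ℝ)) (x j) := by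
        funext t; simp [hG, hjS]
      rw [this]; exact integrable_const _
    · by_cases hji : j = i
      · subst hji
        have : G j j = fun t => a j k * Set.indicator (A j k) id t := by
          funext t
          by_cases ht : t ∈ A j k <;>
            simp [hG, hjS, Set.indicator_of_mem, Set.indicator_of_notMem, ht, mul_assoc]
        rw [this]
        exact ((hint j).indicator (hA j k)).const_mul _
      · have : G i j = Set.indicator (A j k) (fun _ => (1 : ℝ)) := by
          funext t; simp [hG, hjS, hji]
        rw [this]
        exact (integrable_const (1 : ℝ)).indicator (hA j k)
  have hHint : ∀ j, Integrable (H j) (μ j) := by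
    intro j
    by_cases hjS : j ∈ S
    · have : H j = fun _ => Set.indicator (A j k) (fun _ => (1 : ℝ)) (x j) := by
        funext t; simp [hH, hjS]
      rw [this]; exact integrable_const _
    · have : H j = Set.indicator (A j k) (fun _ => (1 : ℝ)) := by
        funext t; simp [hH, hjS]
      rw [this]; exact (integrable_const (1 : ℝ)).indicator (hA j k)
  have hpt : ∀ y : Fin p → ℝ,
      (∑ i, a i k * (if i ∈ S then x i else y i) + b k) *
        Set.indicator {w : Fin p → ℝ | ∀ i, w i ∈ A i k} (fun _ => (1 : ℝ))
          (fun i => if i ∈ S then x i else y i)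
      = ∑ i, ∏ j, G i j (y j) + b k * ∏ j, H j (y j) := by
    intro y
    rw [box_ind]
    have hHj : ∀ j, Set.indicator (A j k) (fun _ => (1 : ℝ))
        ((fun i => if i ∈ S then x i else y i) j) = H j (y j) := fun j => rfl
    rw [Finset.prod_congr rfl fun j _ => hHj j]
    rw [add_mul, Finset.sum_mul]
    congr 1
    refine Finset.sum_congr rfl fun i _ => ?_
    rw [← Finset.mul_prod_erase univ (fun j => G i j (y j)) (mem_univ i),
        ← Finset.mul_prod_erase univ (fun j => H j (y j)) (mem_univ i)]
    have h1 : ∀ j ∈ univ.erase i, G i j (y j) = H j (y j) := by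
      intro j hj
      have : j ≠ i := (Finset.mem_erase.mp hj).1
      simp [hG, hH, this]
    rw [Finset.prod_congr rfl h1]
    have h2 : G i i (y i) = (a i k * (if i ∈ S then x i else y i)) * H i (y i) := by
      simp [hG, hH]
    rw [h2]; ring
  have hGval : ∀ i j, (∫ t, G i j t ∂(μ j))
      = if j = i then a i k * lsvE A μ x k S j else lsvC A μ x k S j := by
    intro i j
    by_cases hjS : j ∈ S
    · have : (fun t => G i j t) = fun _ => (if j = i then a i k * x j else 1) *
          (if x j ∈ A j k then (1 : ℝ) else 0) := by
        funext t; simp [hG, hjS, Set.indicator_apply]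
      rw [this, integral_const]
      simp [lsvE, lsvC, hjS, measure_univ]
      split_ifs <;> ring
    · by_cases hji : j = i
      · subst hji
        have : (fun t => G j j t) = fun t => a j k * Set.indicator (A j k) id t := by
          funext t
          by_cases ht : t ∈ A j k <;>
            simp [hG, hjS, Set.indicator_of_mem, Set.indicator_of_notMem, ht, mul_assoc]
        rw [this, integral_const_mul _ _, integral_indicator (hA j k)]
        simp [lsvE, hjS]
      · have : (fun t => G i j t) = Set.indicator (A j k) (fun _ => (1 : ℝ)) := by
          funext t; simp [hG, hjS, hji]
        rw [this]
        rw [integral_indicator_const (1 : ℝ) (hA j k)]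
        simp [lsvC, hjS, hji, measureReal_def]
  have hHval : ∀ j, (∫ t, H j t ∂(μ j)) = lsvC A μ x k S j := by
    intro j
    by_cases hjS : j ∈ S
    · have : (fun t => H j t) = fun _ => (if x j ∈ A j k then (1 : ℝ) else 0) := by
        funext t; simp [hH, hjS, Set.indicator_apply]
      rw [this, integral_const]
      simp [lsvC, hjS, measure_univ]
    · have : (fun t => H j t) = Set.indicator (A j k) (fun _ => (1 : ℝ)) := by
        funext t; simp [hH, hjS]
      rw [this, integral_indicator_const (1 : ℝ) (hA j k)]
      simp [lsvC, hjS, measureReal_def]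
  calc vComp p m a b A μ x k S
      = ∫ y, (∑ i, ∏ j, G i j (y j) + b k * ∏ j, H j (y j)) ∂(Measure.pi μ) := by
        rw [vComp]; exact integral_congr_ae (Filter.Eventually.of_forall hpt)
    _ = (∑ i, ∫ y, ∏ j, G i j (y j) ∂(Measure.pi μ))
        + b k * ∫ y, ∏ j, H j (y j) ∂(Measure.pi μ) := by
        rw [integral_add (integrable_finset_sum _ fun i _ => integrable_pi_prod μ _ (hGint i))
          ((integrable_pi_prod μ _ hHint).const_mul _),
          integral_finset_sum _ fun i _ => integrable_pi_prod μ _ (hGint i),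
          integral_const_mul _ _]
    _ = ∑ i, a i k * (lsvE A μ x k S i * ∏ j ∈ univ.erase i, lsvC A μ x k S j)
        + b k * ∏ j, lsvC A μ x k S j := by
        congr 1
        · refine Finset.sum_congr rfl fun i _ => ?_
          rw [integral_pi_prod]
          rw [← Finset.mul_prod_erase univ (fun j => ∫ t, G i j t ∂(μ j)) (mem_univ i)]
          rw [hGval i i, if_pos rfl]
          rw [Finset.prod_congr rfl fun j hj => by
            rw [hGval i j, if_neg (Finset.mem_erase.mp hj).1]]
          ring
        · rw [integral_pi_prod, Finset.prod_congr rfl fun j _ => hHval j]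

section key
variable {p m : ℕ} (a : Fin p → Fin m → ℝ) (b : Fin m → ℝ) (A : Fin p → Fin m → Set ℝ)
  (μ : Fin p → Measure ℝ) (x : Fin p → ℝ) (k : Fin m) (S : Finset (Fin p))

-- assume the closed form as hypothesis for now, to test the algebra
theorem vComp_key' (vC : Finset (Fin p) → ℝ)
    (hclosed : ∀ T, vC T
      = ∑ i, a i k * (lsvE A μ x k T i * ∏ j ∈ univ.erase i, lsvC A μ x k T j)
        + b k * ∏ j, lsvC A μ x k T j)
    (l' : Fin p) (hpos : 0 < (μ l' (A l' k)).toReal) (hl : l' ∉ S) :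
    vC (insert l' S)
      = ((if x l' ∈ A l' k then (1 : ℝ) else 0) / (μ l' (A l' k)).toReal) * vC S
        + a l' k * (x l' - (∫ t in A l' k, t ∂(μ l')) / (μ l' (A l' k)).toReal) *
            ((∏ i ∈ insert l' S, if x i ∈ A i k then (1 : ℝ) else 0) *
              ∏ j ∈ (insert l' S)ᶜ, (μ j (A j k)).toReal) := by
  classical
  set S' := insert l' S with hS'
  set ind : ℝ := (if x l' ∈ A l' k then (1 : ℝ) else 0) with hind
  set P : ℝ := (μ l' (A l' k)).toReal with hPdef
  set E : ℝ := ∫ t in A l' k, t ∂(μ l') with hEdef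
  have hP : P ≠ 0 := ne_of_gt hpos
  have hCl' : lsvC A μ x k S' l' = ind := by simp [lsvC, hS', hind]
  have hCl : lsvC A μ x k S l' = P := by simp [lsvC, hl, hPdef]
  have hEl' : lsvE A μ x k S' l' = x l' * ind := by
    simp only [lsvE, hS', hind]
    exact if_pos (Finset.mem_insert_self _ _)
  have hEl : lsvE A μ x k S l' = E := by simp [lsvE, hl, hEdef]
  have hCeq : ∀ j, j ≠ l' → lsvC A μ x k S' j = lsvC A μ x k S j := by
    intro j hj; simp [lsvC, hS', Finset.mem_insert, hj]
  have hEeq : ∀ j, j ≠ l' → lsvE A μ x k S' j = lsvE A μ x k S j := by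
    intro j hj; simp [lsvE, hS', Finset.mem_insert, hj]
  set Q : ℝ := ∏ j ∈ univ.erase l', lsvC A μ x k S j with hQ
  have hQ' : ∏ j ∈ univ.erase l', lsvC A μ x k S' j = Q := by
    exact Finset.prod_congr rfl fun j hj => hCeq j (Finset.mem_erase.mp hj).1
  have hprod' : ∏ j, lsvC A μ x k S' j = ind * Q := by
    rw [← Finset.mul_prod_erase univ _ (mem_univ l'), hCl', hQ']
  have hprod : ∏ j, lsvC A μ x k S j = P * Q := by
    rw [← Finset.mul_prod_erase univ _ (mem_univ l'), hCl]
  -- the T identity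
  have hT : ((∏ i ∈ S', if x i ∈ A i k then (1 : ℝ) else 0) *
      ∏ j ∈ S'ᶜ, (μ j (A j k)).toReal) = ind * Q := by
    rw [← hprod', ← Finset.prod_mul_prod_compl S' (lsvC A μ x k S')]
    congr 1
    · exact Finset.prod_congr rfl fun i hi => by simp [lsvC, hi]
    · exact Finset.prod_congr rfl fun i hi => by
        simp [lsvC, (Finset.mem_compl.mp hi)]
  -- per-i products for i ≠ l'
  have hQi' : ∀ i ∈ univ.erase l', ∏ j ∈ univ.erase i, lsvC A μ x k S' j
      = ind * ∏ j ∈ (univ.erase l').erase i, lsvC A μ x k S j := by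
    intro i hi
    have hil : l' ∈ univ.erase i := by
      simp [Finset.mem_erase, Ne.symm (Finset.mem_erase.mp hi).1]
    rw [← Finset.mul_prod_erase (univ.erase i) _ hil, hCl', Finset.erase_right_comm]
    congr 1
    exact Finset.prod_congr rfl fun j hj =>
      hCeq j (Finset.mem_erase.mp (Finset.mem_of_mem_erase hj)).1
  have hQi : ∀ i ∈ univ.erase l', ∏ j ∈ univ.erase i, lsvC A μ x k S j
      = P * ∏ j ∈ (univ.erase l').erase i, lsvC A μ x k S j := by
    intro i hi
    have hil : l' ∈ univ.erase i := by
      simp [Finset.mem_erase, Ne.symm (Finset.mem_erase.mp hi).1]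
    rw [← Finset.mul_prod_erase (univ.erase i) _ hil, hCl, Finset.erase_right_comm]
  -- rewrite the two closed forms
  set s : ℝ := ∑ i ∈ univ.erase l',
    a i k * (lsvE A μ x k S i * ∏ j ∈ (univ.erase l').erase i, lsvC A μ x k S j) with hs
  have hsum' : ∑ i, a i k * (lsvE A μ x k S' i * ∏ j ∈ univ.erase i, lsvC A μ x k S' j)
      = a l' k * (x l' * ind) * Q + ind * s := by
    rw [← Finset.add_sum_erase univ _ (mem_univ l'), hEl', hQ', hs, Finset.mul_sum]
    congr 1
    · ring
    refine Finset.sum_congr rfl fun i hi => ?_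
    rw [hQi' i hi, hEeq i (Finset.mem_erase.mp hi).1]
    ring
  have hsum : ∑ i, a i k * (lsvE A μ x k S i * ∏ j ∈ univ.erase i, lsvC A μ x k S j)
      = a l' k * E * Q + P * s := by
    rw [← Finset.add_sum_erase univ _ (mem_univ l'), hEl, hs, Finset.mul_sum]
    congr 1
    · ring
    refine Finset.sum_congr rfl fun i hi => ?_
    rw [hQi i hi]
    ring
  rw [hclosed S', hclosed S, hsum', hsum, hprod', hprod, hT]
  field_simp
  ring
end key


section integrable
variable {p m : ℕ} (a : Fin p → Fin m → ℝ) (b : Fin m → ℝ) (A : Fin p → Fin m → Set ℝ)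
  (μ : Fin p → Measure ℝ) (x : Fin p → ℝ) (k : Fin m) (S : Finset (Fin p))

theorem integrand_integrable [∀ i, IsProbabilityMeasure (μ i)]
    (hA : ∀ i k, MeasurableSet (A i k)) (hint : ∀ i, Integrable (id : ℝ → ℝ) (μ i)) :
    Integrable (fun y : Fin p → ℝ =>
      (∑ i, a i k * (if i ∈ S then x i else y i) + b k) *
        Set.indicator {w : Fin p → ℝ | ∀ i, w i ∈ A i k} (fun _ => (1 : ℝ))
          (fun i => if i ∈ S then x i else y i)) (Measure.pi μ) := by
  classical
  set G : Fin p → Fin p → ℝ → ℝ := fun i j t =>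
    (if j = i then a i k * (if j ∈ S then x j else t) else 1) *
      Set.indicator (A j k) (fun _ => (1 : ℝ)) (if j ∈ S then x j else t) with hG
  set H : Fin p → ℝ → ℝ := fun j t =>
    Set.indicator (A j k) (fun _ => (1 : ℝ)) (if j ∈ S then x j else t) with hH
  have hGint : ∀ i j, Integrable (G i j) (μ j) := by
    intro i j
    by_cases hjS : j ∈ S
    · have : G i j = fun _ => (if j = i then a i k * x j else 1) *
          Set.indicator (A j k) (fun _ => (1 : ℝ)) (x j) := by
        funext t; simp [hG, hjS]
      rw [this]; exact integrable_const _
    · by_cases hji : j = i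
      · subst hji
        have : G j j = fun t => a j k * Set.indicator (A j k) id t := by
          funext t
          by_cases ht : t ∈ A j k <;>
            simp [hG, hjS, Set.indicator_of_mem, Set.indicator_of_notMem, ht, mul_assoc]
        rw [this]
        exact ((hint j).indicator (hA j k)).const_mul _
      · have : G i j = Set.indicator (A j k) (fun _ => (1 : ℝ)) := by
          funext t; simp [hG, hjS, hji]
        rw [this]
        exact (integrable_const (1 : ℝ)).indicator (hA j k)
  have hHint : ∀ j, Integrable (H j) (μ j) := by
    intro j
    by_cases hjS : j ∈ S
    · have : H j = fun _ => Set.indicator (A j k) (fun _ => (1 : ℝ)) (x j) := by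
        funext t; simp [hH, hjS]
      rw [this]; exact integrable_const _
    · have : H j = Set.indicator (A j k) (fun _ => (1 : ℝ)) := by
        funext t; simp [hH, hjS]
      rw [this]; exact (integrable_const (1 : ℝ)).indicator (hA j k)
  have hpt : ∀ y : Fin p → ℝ,
      (∑ i, a i k * (if i ∈ S then x i else y i) + b k) *
        Set.indicator {w : Fin p → ℝ | ∀ i, w i ∈ A i k} (fun _ => (1 : ℝ))
          (fun i => if i ∈ S then x i else y i)
      = ∑ i, ∏ j, G i j (y j) + b k * ∏ j, H j (y j) := by
    intro y
    rw [box_ind]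
    have hHj : ∀ j, Set.indicator (A j k) (fun _ => (1 : ℝ))
        ((fun i => if i ∈ S then x i else y i) j) = H j (y j) := fun j => rfl
    rw [Finset.prod_congr rfl fun j _ => hHj j]
    rw [add_mul, Finset.sum_mul]
    congr 1
    refine Finset.sum_congr rfl fun i _ => ?_
    rw [← Finset.mul_prod_erase univ (fun j => G i j (y j)) (mem_univ i),
        ← Finset.mul_prod_erase univ (fun j => H j (y j)) (mem_univ i)]
    have h1 : ∀ j ∈ univ.erase i, G i j (y j) = H j (y j) := by
      intro j hj
      have : j ≠ i := (Finset.mem_erase.mp hj).1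
      simp [hG, hH, this]
    rw [Finset.prod_congr rfl h1]
    have h2 : G i i (y i) = (a i k * (if i ∈ S then x i else y i)) * H i (y i) := by
      simp [hG, hH]
    rw [h2]; ring
  rw [funext hpt]
  exact (integrable_finset_sum _ fun i _ => integrable_pi_prod μ _ (hGint i)).add
    ((integrable_pi_prod μ _ hHint).const_mul _)

theorem vComp_key [∀ i, IsProbabilityMeasure (μ i)]
    (hA : ∀ i k, MeasurableSet (A i k)) (hint : ∀ i, Integrable (id : ℝ → ℝ) (μ i))
    (l' : Fin p) (hpos : 0 < (μ l' (A l' k)).toReal) (hl : l' ∉ S) :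
    vComp p m a b A μ x k (insert l' S)
      = ((if x l' ∈ A l' k then (1 : ℝ) else 0) / (μ l' (A l' k)).toReal) *
          vComp p m a b A μ x k S
        + a l' k * (x l' - (∫ t in A l' k, t ∂(μ l')) / (μ l' (A l' k)).toReal) *
            ((∏ i ∈ insert l' S, if x i ∈ A i k then (1 : ℝ) else 0) *
              ∏ j ∈ (insert l' S)ᶜ, (μ j (A j k)).toReal) :=
  vComp_key' a b A μ x k S (vComp p m a b A μ x k)
    (fun T => vComp_closed a b A μ x k T hA hint) l' hpos hl
end integrable

/-- **Local Shapley Values for piecewise linear models.** Let `f` be piecewise linear on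
disjoint hyperrectangles `A_k = Πᵢ A_{i,k}` (each `A_{i,k}` the trace on `ℝ` of a closed
`EReal` interval), the features mutually independent with `P(Xᵢ ∈ A_{i,k}) > 0`.
The Local Shapley Value of feature `l` at `x` — with value function
`v(S) = E[f(X) | X_S = x_S]` — decomposes as `φ_{x_l} = ∑ₖ φ_{x_l}^k` with
`φ_{x_l}^k = (1{x_l∈A_{l,k}}/P(X_l∈A_{l,k}) − 1)·∑_S w(S) v_k(S)
  + a_{l,k}·(x_l − E[X_l·1{X_l∈A_{l,k}}]/P(X_l∈A_{l,k}))
      ·∑_S w(S)·Π_{i∈S∪{l}} 1{x_i∈A_{i,k}}·Π_{j∉S∪{l}} P(X_j∈A_{j,k})`. -/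
theorem localShapley_piecewiseLinear (p m : ℕ) (a : Fin p → Fin m → ℝ) (b : Fin m → ℝ)
    (A : Fin p → Fin m → Set ℝ)
    (hrect : ∀ i k, ∃ lo hi : EReal, A i k = {t : ℝ | lo ≤ (t : EReal) ∧ (t : EReal) ≤ hi})
    (hdisj : Pairwise (Function.onFun Disjoint
      fun k => {w : Fin p → ℝ | ∀ i, w i ∈ A i k}))
    (μ : Fin p → Measure ℝ) [∀ i, IsProbabilityMeasure (μ i)]
    (hint : ∀ i, Integrable (id : ℝ → ℝ) (μ i))
    (hpos : ∀ i k, 0 < (μ i (A i k)).toReal)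
    (x : Fin p → ℝ) (l : Fin p) :
    shapleyValue p
      (fun S => ∫ y, piecewiseLinear p m a b A (fun i => if i ∈ S then x i else y i)
        ∂(Measure.pi μ)) l
    = ∑ k,
        (((if x l ∈ A l k then (1 : ℝ) else 0) / (μ l (A l k)).toReal - 1) *
            ∑ S ∈ (Finset.univ.erase l).powerset,
              (1 / (p : ℝ)) * ((Nat.choose (p - 1) S.card : ℝ))⁻¹ * vComp p m a b A μ x k S
          + a l k * (x l - (∫ t in A l k, t ∂(μ l)) / (μ l (A l k)).toReal) *
              ∑ S ∈ (Finset.univ.erase l).powerset,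
                (1 / (p : ℝ)) * ((Nat.choose (p - 1) S.card : ℝ))⁻¹ *
                  ((∏ i ∈ insert l S, if x i ∈ A i k then (1 : ℝ) else 0) *
                    ∏ j ∈ (insert l S)ᶜ, (μ j (A j k)).toReal)) := by
  classical
  have hA : ∀ i k, MeasurableSet (A i k) := by
    intro i k
    obtain ⟨lo, hi, h⟩ := hrect i k
    rw [h]
    exact ((isClosed_Ici.preimage continuous_coe_real_ereal).inter
      (isClosed_Iic.preimage continuous_coe_real_ereal)).measurableSet
  have hv : ∀ S : Finset (Fin p),
      (∫ y, piecewiseLinear p m a b A (fun i => if i ∈ S then x i else y i) ∂(Measure.pi μ))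
        = ∑ k, vComp p m a b A μ x k S := by
    intro S
    simp only [piecewiseLinear]
    rw [integral_finset_sum _ fun k _ => integrand_integrable a b A μ x k S hA hint]
    rfl
  rw [shapleyValue]
  simp only [hv, ← Finset.sum_sub_distrib, Finset.mul_sum]
  rw [Finset.sum_comm]
  refine Finset.sum_congr rfl fun k _ => ?_
  rw [← Finset.sum_add_distrib]
  refine Finset.sum_congr rfl fun S hS => ?_
  have hlS : l ∉ S := fun h => (Finset.mem_erase.mp (Finset.mem_powerset.mp hS h)).1 rfl
  rw [vComp_key a b A μ x k S hA hint l (hpos l k) hlS]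
  ring
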